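/- Let A be a feasible tree solution and F a feasible solution with V[A]=V[F]. If e,f ∈ A are compatible, then e is essential if and only if f is essential. Moreover, any two unsafe edges of A are compatible, so the set S_u of all unsafe edges of A forms a single equivalence class of ~cp. Consequently, every equivalence class S of ~cp consists either entirely of essential edges or entirely of inessential edges, and every class S ≠ S_u consists only of safe edges. -/

import Mathlib

open Finset

attribute [local instance] Classical.propDecidable

variable {V : Type*} [Fintype V] [DecidableEq V]

/-- The simple graph on `V` induced by a finite set of (undirected) edges. -/
def graphOf (F : Finset (Sym2 V)) : SimpleGraph V where
  Adj u v := u ≠ v ∧ s(u, v) ∈ F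
  symm := by
    constructor
    intro u v h
    refine ⟨Ne.symm h.1, ?_⟩
    rw [Sym2.eq_swap]
    exact h.2
  loopless := by constructor; intro v h; exact h.1 rfl

/-- The set of vertices incident to at least one edge of `F` (denoted `V[F]` in the paper). -/
def supp (F : Finset (Sym2 V)) : Set V := {v | ∃ e ∈ F, v ∈ e}

/-- A Steiner forest `F` is feasible for the terminal pairs `T` if it connects every pair. -/
def Feasible (F : Finset (Sym2 V)) (T : Finset (V × V)) : Prop :=
  ∀ p ∈ T, (graphOf F).Reachable p.1 p.2

/-- Total edge cost `d(F)`. -/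
def cost (d : Sym2 V → ℝ) (F : Finset (Sym2 V)) : ℝ := ∑ e ∈ F, d e

/-- `A` is a tree (on its vertex support): loopless edges, acyclic, connected on `V[A]`. -/
def IsTreeSol (A : Finset (Sym2 V)) : Prop :=
  (∀ e ∈ A, ¬ e.IsDiag) ∧ (graphOf A).IsAcyclic ∧
    ∀ u ∈ supp A, ∀ v ∈ supp A, (graphOf A).Reachable u v

/-- Shortest-path distance between `u` and `v` in the graph with edge set `Eall`
and edge lengths `d`. -/
noncomputable def wdist (Eall : Finset (Sym2 V)) (d : Sym2 V → ℝ) (u v : V) : ℝ :=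
  ⨅ p : (graphOf Eall).Walk u v, (p.edges.map d).sum

/-- Width of a vertex set `W`: the largest shortest-path distance of a terminal pair
whose two members both lie in `W`. -/
noncomputable def widthSet (Eall : Finset (Sym2 V)) (d : Sym2 V → ℝ) (T : Finset (V × V))
    (W : Set V) : ℝ :=
  sSup {x : ℝ | ∃ p ∈ T, p.1 ∈ W ∧ p.2 ∈ W ∧ x = wdist Eall d p.1 p.2}

/-- Total width `w(F)`: the sum of the widths of the connected components of `F`. -/
noncomputable def totalWidth (Eall : Finset (Sym2 V)) (d : Sym2 V → ℝ) (T : Finset (V × V))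
    (F : Finset (Sym2 V)) : ℝ :=
  ∑ᶠ c : (graphOf F).ConnectedComponent, widthSet Eall d T c.supp

/-- The potential `φ(F) = d(F) + w(F)`. -/
noncomputable def phi (Eall : Finset (Sym2 V)) (d : Sym2 V → ℝ) (T : Finset (V × V))
    (F : Finset (Sym2 V)) : ℝ :=
  cost d F + totalWidth Eall d T F

/-- Some edge of `F` leaves the vertex set `W`. -/
def leavesSet (F : Finset (Sym2 V)) (W : Set V) : Prop :=
  ∃ g ∈ F, ∃ x y : V, g = s(x, y) ∧ x ∈ W ∧ y ∉ W

/-- `T_{e,f}`: the connected component of `A ∖ {e,f}` containing the interior of the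
unique `e`–`f` path of the tree `A`; equivalently, the component containing an endpoint
of `e` together with an endpoint of `f`. -/
def midComp (A : Finset (Sym2 V)) (e f : Sym2 V) : Set V :=
  {v | ∃ x ∈ e, ∃ y ∈ f,
    (graphOf (A \ {e, f})).Reachable x y ∧ (graphOf (A \ {e, f})).Reachable x v}

/-- `e` and `f` are compatible w.r.t. `F` (`e ~cp f`). -/
def Compatible (A F : Finset (Sym2 V)) (e f : Sym2 V) : Prop :=
  e = f ∨ ¬ leavesSet F (midComp A e f)

/-- `e` is safe: some `F`-edge crosses between the two components of `A ∖ {e}`. -/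
def Safe (A F : Finset (Sym2 V)) (e : Sym2 V) : Prop :=
  ∃ g ∈ F, ∃ x y : V, g = s(x, y) ∧ x ≠ y ∧ ¬ (graphOf (A.erase e)).Reachable x y

/-- `e` is essential: removing it from `A` destroys feasibility. -/
def Essential (A : Finset (Sym2 V)) (T : Finset (V × V)) (e : Sym2 V) : Prop :=
  ¬ Feasible (A.erase e) T

/-- The compatibility class of the edge `e` of `A`. -/
noncomputable def cls (A F : Finset (Sym2 V)) (e : Sym2 V) : Finset (Sym2 V) :=
  A.filter (fun f => Compatible A F e f)

/-- `S_u`: the set of unsafe edges of `A`. -/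
noncomputable def unsafeCls (A F : Finset (Sym2 V)) : Finset (Sym2 V) :=
  A.filter (fun e => ¬ Safe A F e)

/-- `𝔖`: the set of compatibility classes of edges of `A`. -/
noncomputable def classes (A F : Finset (Sym2 V)) : Finset (Finset (Sym2 V)) :=
  A.image (cls A F)

/-- `e` lies on the fundamental cycle closed by adding the edge `f` to the tree `A`. -/
def onFundCycle (A : Finset (Sym2 V)) (f e : Sym2 V) : Prop :=
  e ∈ A ∧ ∀ x y : V, f = s(x, y) →
    (graphOf A).Reachable x y ∧ ¬ (graphOf (A.erase e)).Reachable x y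

/-- Edge/edge swap optimality of `A` w.r.t. added edges from `Eadd` and objective `obj`:
no swap that adds an edge `f ∈ Eadd` and removes one edge of the cycle it closes,
keeping feasibility, strictly decreases the objective. -/
def EdgeEdgeSwapOptimal (Eadd : Finset (Sym2 V)) (T : Finset (V × V))
    (obj : Finset (Sym2 V) → ℝ) (A : Finset (Sym2 V)) : Prop :=
  ∀ f ∈ Eadd, ∀ e, onFundCycle A f e →
    Feasible (A.erase e ∪ {f}) T → obj A ≤ obj (A.erase e ∪ {f})

/-- Edge/set swap optimality of `A` w.r.t. added edges from `Eadd` and objective `obj`: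
no swap that adds an edge `f ∈ Eadd` and removes a set `S` of edges of the cycle it closes,
keeping feasibility, strictly decreases the objective. -/
def EdgeSetSwapOptimal (Eadd : Finset (Sym2 V)) (T : Finset (V × V))
    (obj : Finset (Sym2 V) → ℝ) (A : Finset (Sym2 V)) : Prop :=
  ∀ f ∈ Eadd, ∀ S ⊆ A, (∀ e ∈ S, onFundCycle A f e) →
    Feasible ((A \ S) ∪ {f}) T → obj A ≤ obj ((A \ S) ∪ {f})

/-- Removing swap optimality: deleting any (feasibility preserving) edge set from `A`
does not strictly decrease the objective. -/
def RemovingSwapOptimal (T : Finset (V × V))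
    (obj : Finset (Sym2 V) → ℝ) (A : Finset (Sym2 V)) : Prop :=
  ∀ S ⊆ A, Feasible (A \ S) T → obj A ≤ obj (A \ S)

/-- Path/set swap optimality of `A`: for vertices `u, v` in the same component of `A`,
adding a set `P ⊆ Eadd` of edges (along a `u`–`v` connection) and removing a set `S` of
edges of the component of `u`, in a way that keeps `u,v` connected and the solution
feasible, does not strictly decrease the objective. -/
def PathSetSwapOptimal (Eadd : Finset (Sym2 V)) (T : Finset (V × V))
    (obj : Finset (Sym2 V) → ℝ) (A : Finset (Sym2 V)) : Prop :=
  ∀ u v : V, (graphOf A).Reachable u v →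
    ∀ P : Finset (Sym2 V), P ⊆ Eadd → ∀ S ⊆ A,
      (∀ e ∈ S, ∃ x ∈ e, (graphOf A).Reachable u x) →
      (graphOf ((A \ S) ∪ P)).Reachable u v →
      Feasible ((A \ S) ∪ P) T → obj A ≤ obj ((A \ S) ∪ P)

/-- A connected component `c` of `A ∖ S` is an *inner* component for the class `S`
if it touches (at least) two distinct edges of `S`. -/
def innerComp (A S : Finset (Sym2 V)) (c : (graphOf (A \ S)).ConnectedComponent) : Prop :=
  ∃ e ∈ S, ∃ e' ∈ S, e ≠ e' ∧ (∃ x ∈ e, (graphOf (A \ S)).connectedComponentMk x = c) ∧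
    ∃ y ∈ e', (graphOf (A \ S)).connectedComponentMk y = c

/-- The sum of the widths of the inner components `E_{S,i}`, `i ∈ In_S`, of the class `S`. -/
noncomputable def innerWidthSum (Eall : Finset (Sym2 V)) (d : Sym2 V → ℝ) (T : Finset (V × V))
    (A S : Finset (Sym2 V)) : ℝ :=
  ∑ᶠ c : (graphOf (A \ S)).ConnectedComponent,
    if innerComp A S c then widthSet Eall d T c.supp else 0

/-- `index(E')` for a vertex set `W`: the largest index `i` (in the enumeration `tp` of the
terminal pairs by nondecreasing distance) of a terminal pair lying entirely inside `W`. -/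
noncomputable def idxOf {nt : ℕ} (tp : Fin nt → V × V) (W : Set V) : ℕ :=
  sSup {i : ℕ | ∃ h : i < nt, (tp ⟨i, h⟩).1 ∈ W ∧ (tp ⟨i, h⟩).2 ∈ W}

/-- The finite vertex support of an edge set. -/
def suppF (B : Finset (Sym2 V)) : Finset V :=
  Finset.univ.filter (fun v => ∃ e ∈ B, v ∈ e)

/-- `e` crosses between two different connected components of `A`. -/
def crossingEdge (A : Finset (Sym2 V)) (e : Sym2 V) : Prop :=
  ∀ x y : V, e = s(x, y) → ¬ (graphOf A).Reachable x y

/-- The components of `A` touched by the edge set `B`, i.e. the nodes of `G_A`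
incident to `B`. -/
noncomputable def touched (A B : Finset (Sym2 V)) :
    Finset ((graphOf A).ConnectedComponent) :=
  (suppF B).image ((graphOf A).connectedComponentMk)

/-- `B` is (the edge set of) a tree in the contracted multigraph `G_A`: all its edges cross
between components of `A`, it is connected (through the components of `A` it touches), and
it has one edge less than the number of components it touches. -/
def IsGATree (A B : Finset (Sym2 V)) : Prop :=
  (∀ e ∈ B, crossingEdge A e) ∧ (touched A B).card = B.card + 1 ∧
    ∀ x ∈ suppF B, ∀ y ∈ suppF B, (graphOf (A ∪ B)).Reachable x y

/-- `A` is `c`-approximate connecting move optimal: for every tree `B` in `G_A` (with edges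
taken from `Emoves`), the total width of the components it connects, minus the largest of
these widths, is at most `c` times the length of the tree. -/
def ConnApproxOptimal (Emoves Eall : Finset (Sym2 V)) (d : Sym2 V → ℝ) (T : Finset (V × V))
    (c : ℝ) (A : Finset (Sym2 V)) : Prop :=
  ∀ B ⊆ Emoves, IsGATree A B →
    (∑ t ∈ touched A B, widthSet Eall d T t.supp)
      - (⨆ t ∈ touched A B, widthSet Eall d T t.supp) ≤ c * ∑ e ∈ B, d e

set_option linter.unusedSectionVars false
set_option maxHeartbeats 1000000

section Aux

variable {V : Type*} [Fintype V] [DecidableEq V]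

lemma graphOf_mono {B C : Finset (Sym2 V)} (h : B ⊆ C) : graphOf B ≤ graphOf C :=
  fun _ _ hxy => ⟨hxy.1, h hxy.2⟩

lemma reach_mono {B C : Finset (Sym2 V)} (h : B ⊆ C) {x y : V}
    (hr : (graphOf B).Reachable x y) : (graphOf C).Reachable x y :=
  hr.mono (graphOf_mono h)

lemma cut_lemma {G : SimpleGraph V} {W : Set V} {u v : V}
    (w : G.Walk u v) (hu : u ∈ W) (hv : v ∉ W) :
    ∃ x y, G.Adj x y ∧ x ∈ W ∧ y ∉ W := by
  induction w with
  | nil => exact absurd hu hv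
  | @cons x z y h p ih =>
    by_cases hz : z ∈ W
    · exact ih hz hv
    · exact ⟨x, z, h, hu, hz⟩

lemma avoid {B : Finset (Sym2 V)} {c d x y : V}
    (hr : (graphOf B).Reachable x y) :
    (graphOf (B.erase s(c,d))).Reachable x y ∨
    (graphOf (B.erase s(c,d))).Reachable x c ∨
    (graphOf (B.erase s(c,d))).Reachable x d := by
  obtain ⟨w⟩ := hr
  induction w with
  | nil => exact Or.inl (SimpleGraph.Reachable.refl _)
  | @cons x z y h p ih =>
    by_cases hxz : s(x,z) = s(c,d)
    · rcases Sym2.eq_iff.mp hxz with ⟨rfl, rfl⟩ | ⟨rfl, rfl⟩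
      · exact Or.inr (Or.inl (SimpleGraph.Reachable.refl _))
      · exact Or.inr (Or.inr (SimpleGraph.Reachable.refl _))
    · have h' : (graphOf (B.erase s(c,d))).Adj x z :=
        ⟨h.1, Finset.mem_erase.mpr ⟨hxz, h.2⟩⟩
      rcases ih with h1 | h1 | h1
      · exact Or.inl (h'.reachable.trans h1)
      · exact Or.inr (Or.inl (h'.reachable.trans h1))
      · exact Or.inr (Or.inr (h'.reachable.trans h1))

lemma tree_bridge {A : Finset (Sym2 V)} (hA : IsTreeSol A) {e : Sym2 V} (he : e ∈ A)
    {a b : V} (hab : e = s(a,b)) (hne : a ≠ b) :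
    ¬ (graphOf (A.erase e)).Reachable a b := by
  intro hr
  have hadj : (graphOf A).Adj a b := ⟨hne, hab ▸ he⟩
  have hbr := SimpleGraph.isAcyclic_iff_forall_adj_isBridge.mp hA.2.1 hadj
  rw [SimpleGraph.isBridge_iff] at hbr
  apply hbr
  refine hr.mono ?_
  intro x y hxy
  rw [SimpleGraph.deleteEdges_adj]
  refine ⟨⟨hxy.1, (Finset.erase_subset _ _) hxy.2⟩, ?_⟩
  intro hmem
  rw [Set.mem_singleton_iff] at hmem
  have := hxy.2
  rw [hmem, ← hab] at this
  exact (Finset.mem_erase.mp this).1 rfl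

section Core

variable {A : Finset (Sym2 V)} {e f : Sym2 V} {a b c d : V}

lemma sdiff_pair : A \ {e, f} = (A.erase e).erase f := by
  ext g
  simp only [Finset.mem_sdiff, Finset.mem_insert, Finset.mem_singleton, Finset.mem_erase]
  tauto

lemma erase_swap : (A.erase e).erase f = (A.erase f).erase e := by
  ext g
  simp only [Finset.mem_erase]
  tauto

lemma sub_e : (A.erase e).erase f ⊆ A.erase e := Finset.erase_subset _ _

lemma sub_f : (A.erase e).erase f ⊆ A.erase f := by rw [erase_swap]; exact Finset.erase_subset _ _

variable (hA : IsTreeSol A) (he : e ∈ A) (hf : f ∈ A) (hef : e ≠ f)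
  (hab : e = s(a,b)) (hcd : f = s(c,d))

include hA he hab in

lemma ne_ab : a ≠ b := by
  intro h
  exact hA.1 e he (by rw [hab, h]; exact Sym2.mk_isDiag_iff.mpr rfl)

include hA hf hcd in

lemma ne_cd : c ≠ d := by
  intro h
  exact hA.1 f hf (by rw [hcd, h]; exact Sym2.mk_isDiag_iff.mpr rfl)

include hA hf hef hcd in

lemma adj_cd_Ae : (graphOf (A.erase e)).Adj c d := by
  refine ⟨ne_cd hA hf hcd, ?_⟩
  rw [← hcd]
  exact Finset.mem_erase.mpr ⟨fun h => hef h.symm, hf⟩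

end Core

section Core2

variable {A : Finset (Sym2 V)} {e f : Sym2 V} {a b c d : V}

variable (hA : IsTreeSol A) (he : e ∈ A) (hf : f ∈ A) (hef : e ≠ f)
  (hab : e = s(a,b)) (hcd : f = s(c,d))

include hA he hab in

lemma not_R2_ac (hbc : (graphOf ((A.erase e).erase f)).Reachable b c) (h : (graphOf ((A.erase e).erase f)).Reachable a c) : False :=
  tree_bridge hA he hab (ne_ab hA he hab)
    (reach_mono sub_e (h.trans hbc.symm))

include hA hf hcd in

lemma not_R2_bd (hbc : (graphOf ((A.erase e).erase f)).Reachable b c) (h : (graphOf ((A.erase e).erase f)).Reachable b d) : False :=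
  tree_bridge hA hf hcd (ne_cd hA hf hcd)
    (reach_mono sub_f (hbc.symm.trans h))

include hA he hf hef hab hcd in

lemma not_R2_ad (hbc : (graphOf ((A.erase e).erase f)).Reachable b c) (h : (graphOf ((A.erase e).erase f)).Reachable a d) : False := by
  apply tree_bridge hA he hab (ne_ab hA he hab)
  have h1 : (graphOf (A.erase e)).Reachable a d := reach_mono sub_e h
  have h2 : (graphOf (A.erase e)).Reachable d c := (adj_cd_Ae hA hf hef hcd).symm.reachable
  have h3 : (graphOf (A.erase e)).Reachable c b := (reach_mono sub_e hbc).symm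
  exact (h1.trans h2).trans h3

include hA he hf hef hab hcd in

lemma orient : ∃ x ∈ e, ∃ y ∈ f, (graphOf ((A.erase e).erase f)).Reachable x y := by
  have hare : a ∈ supp A := ⟨e, he, by rw [hab]; exact Sym2.mem_mk_left _ _⟩
  have hcre : c ∈ supp A := ⟨f, hf, by rw [hcd]; exact Sym2.mem_mk_left _ _⟩
  have h0 : (graphOf A).Reachable c a := hA.2.2 c hcre a hare
  have h1 : ∃ x, x ∈ e ∧ (graphOf (A.erase e)).Reachable c x := by
    rcases (hab ▸ avoid (c := a) (d := b) h0) with h | h | h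
    · exact ⟨a, by rw [hab]; exact Sym2.mem_mk_left _ _, h⟩
    · exact ⟨a, by rw [hab]; exact Sym2.mem_mk_left _ _, h⟩
    · exact ⟨b, by rw [hab]; exact Sym2.mem_mk_right _ _, h⟩
  obtain ⟨x, hxe, hcx⟩ := h1
  rcases (hcd ▸ avoid (c := c) (d := d) hcx.symm) with h | h | h
  · exact ⟨x, hxe, c, by rw [hcd]; exact Sym2.mem_mk_left _ _, h⟩
  · exact ⟨x, hxe, c, by rw [hcd]; exact Sym2.mem_mk_left _ _, h⟩
  · exact ⟨x, hxe, d, by rw [hcd]; exact Sym2.mem_mk_right _ _, h⟩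

include hA he hf hef hab hcd in

lemma midComp_eq (hbc : (graphOf ((A.erase e).erase f)).Reachable b c) : midComp A e f = {z | (graphOf ((A.erase e).erase f)).Reachable b z} := by
  ext z
  simp only [midComp, Set.mem_setOf_eq, sdiff_pair]
  constructor
  · rintro ⟨x, hxe, y, hyf, hxy, hxz⟩
    rw [hab, Sym2.mem_iff] at hxe
    rw [hcd, Sym2.mem_iff] at hyf
    have hbx : (graphOf ((A.erase e).erase f)).Reachable b x := by
      rcases hxe with rfl | rfl
      · rcases hyf with rfl | rfl
        · exact absurd hxy (fun h => not_R2_ac hA he hab hbc h)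
        · exact absurd hxy (fun h => not_R2_ad hA he hf hef hab hcd hbc h)
      · exact SimpleGraph.Reachable.refl _
    exact hbx.trans hxz
  · intro h
    exact ⟨b, by rw [hab]; exact Sym2.mem_mk_right _ _,
      c, by rw [hcd]; exact Sym2.mem_mk_left _ _, hbc, h⟩

end Core2

section Main

variable {T : Finset (V × V)} {A F : Finset (Sym2 V)} {e f : Sym2 V}

lemma orient' (hA : IsTreeSol A) (he : e ∈ A) (hf : f ∈ A) (hef : e ≠ f) :
    ∃ a b c d : V, e = s(a,b) ∧ f = s(c,d) ∧
      (graphOf ((A.erase e).erase f)).Reachable b c := by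
  obtain ⟨⟨a0, b0⟩, hab0⟩ := e.exists_rep
  obtain ⟨⟨c0, d0⟩, hcd0⟩ := f.exists_rep
  obtain ⟨x, hxe, y, hyf, hxy⟩ := orient hA he hf hef hab0.symm hcd0.symm
  rw [← hab0, Sym2.mem_iff] at hxe
  rw [← hcd0, Sym2.mem_iff] at hyf
  refine ⟨if x = a0 then b0 else a0, x, y, if y = c0 then d0 else c0, ?_, ?_, hxy⟩
  · rcases hxe with rfl | rfl
    · simp only [if_pos rfl]; rw [← hab0, Sym2.eq_swap] <;> simp
    · by_cases hx : x = a0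
      · subst hx; simp only [if_pos rfl]; rw [← hab0, Sym2.eq_swap] <;> simp
      · simp only [if_neg hx]; rw [← hab0]
  · rcases hyf with rfl | rfl
    · simp only [if_pos rfl]; rw [← hcd0] <;> simp
    · by_cases hy : y = c0
      · subst hy; simp only [if_pos rfl]; rw [← hcd0] <;> simp
      · simp only [if_neg hy]; rw [← hcd0, Sym2.eq_swap]

lemma unsafe_forall (hue : ¬ Safe A F e) :
    ∀ g ∈ F, ∀ x y : V, g = s(x, y) → x ≠ y → (graphOf (A.erase e)).Reachable x y := by
  unfold Safe at hue
  push_neg at hue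
  exact hue

/-- L3: if `e` is unsafe and `e ~cp f` (nontrivially), then `f` is unsafe. -/

lemma unsafe_of_compat (hA : IsTreeSol A) (he : e ∈ A) (hf : f ∈ A) (hef : e ≠ f)
    (hM : ¬ leavesSet F (midComp A e f)) (hue : ¬ Safe A F e) : ¬ Safe A F f := by
  rintro ⟨g, hgF, x, y, hgxy, hxyne, hnr⟩
  obtain ⟨a, b, c, d, hab, hcd, hbc⟩ := orient' hA he hf hef
  have hMeq := midComp_eq hA he hf hef hab hcd hbc
  have hxe : (graphOf (A.erase e)).Reachable x y := unsafe_forall hue g hgF x y hgxy hxyne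
  have hx2 : (graphOf ((A.erase e).erase f)).Reachable x c ∨
      (graphOf ((A.erase e).erase f)).Reachable x d := by
    rcases (hcd ▸ avoid (c := c) (d := d) hxe) with h | h | h
    · exact absurd (reach_mono sub_f h) hnr
    · exact Or.inl h
    · exact Or.inr h
  have hy2 : (graphOf ((A.erase e).erase f)).Reachable y c ∨
      (graphOf ((A.erase e).erase f)).Reachable y d := by
    rcases (hcd ▸ avoid (c := c) (d := d) hxe.symm) with h | h | h
    · exact absurd (reach_mono sub_f h.symm) hnr
    · exact Or.inl h
    · exact Or.inr h
  rcases hx2 with hx2 | hx2 <;> rcases hy2 with hy2 | hy2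
  · exact hnr (reach_mono sub_f (hx2.trans hy2.symm))
  · -- x on c side (in M), y on d side (not in M)
    apply hM
    refine ⟨g, hgF, x, y, hgxy, ?_, ?_⟩
    · rw [hMeq]; exact hbc.trans hx2.symm
    · rw [hMeq]; intro hby
      exact not_R2_bd hA hf hcd hbc (hby.trans hy2)
  · -- y in M, x not in M
    apply hM
    refine ⟨g, hgF, y, x, hgxy.trans (Sym2.eq_swap), ?_, ?_⟩
    · rw [hMeq]; exact hbc.trans hy2.symm
    · rw [hMeq]; intro hbx
      exact not_R2_bd hA hf hcd hbc (hbx.trans hx2)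
  · exact hnr (reach_mono sub_f (hx2.trans hy2.symm))

/-- L2: two unsafe edges are compatible. -/

lemma compat_of_unsafe (hA : IsTreeSol A) (he : e ∈ A) (hf : f ∈ A) (hef : e ≠ f)
    (hue : ¬ Safe A F e) (huf : ¬ Safe A F f) : ¬ leavesSet F (midComp A e f) := by
  rintro ⟨g, hgF, x, y, hgxy, hxM, hyM⟩
  obtain ⟨a, b, c, d, hab, hcd, hbc⟩ := orient' hA he hf hef
  have hMeq := midComp_eq hA he hf hef hab hcd hbc
  rw [hMeq] at hxM hyM
  have hne : x ≠ y := by rintro rfl; exact hyM hxM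
  have h1 : (graphOf (A.erase e)).Reachable x y := unsafe_forall hue g hgF x y hgxy hne
  have h2 : (graphOf (A.erase f)).Reachable x y := unsafe_forall huf g hgF x y hgxy hne
  have hyd : (graphOf ((A.erase e).erase f)).Reachable y d := by
    rcases (hcd ▸ avoid (c := c) (d := d) h1.symm) with h | h | h
    · exact absurd (h.trans hxM.symm).symm hyM
    · exact absurd (hbc.trans h.symm) hyM
    · exact h
  have hya : (graphOf ((A.erase e).erase f)).Reachable y a := by
    have h2' := h2.symm
    rcases (hab ▸ avoid (c := a) (d := b) h2') with h | h | h
    · rw [← erase_swap] at h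
      exact absurd (h.trans hxM.symm).symm hyM
    · rw [← erase_swap] at h
      exact h
    · rw [← erase_swap] at h
      exact absurd h.symm hyM
  exact not_R2_ad hA he hf hef hab hcd hbc (hya.symm.trans hyd)

/-- L1: compatibility transfers essentiality. -/

lemma essential_of_compat (hAfeas : Feasible A T) (hFfeas : Feasible F T)
    (hA : IsTreeSol A) (he : e ∈ A) (hf : f ∈ A) (hef : e ≠ f)
    (hM : ¬ leavesSet F (midComp A e f))
    (hess : Essential A T e) : Essential A T f := by
  unfold Essential Feasible at hess
  push_neg at hess
  obtain ⟨p, hpT, hsep⟩ := hess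
  have hFr : (graphOf F).Reachable p.1 p.2 := hFfeas p hpT
  have hAr : (graphOf A).Reachable p.1 p.2 := hAfeas p hpT
  obtain ⟨a, b, c, d, hab, hcd, hbc⟩ := orient' hA he hf hef
  have hMeq := midComp_eq hA he hf hef hab hcd hbc
  have key : ∀ u v : V, (graphOf F).Reachable u v →
      ¬ (graphOf (A.erase e)).Reachable u v →
      (graphOf (A.erase e)).Reachable u a →
      (graphOf (A.erase e)).Reachable v b →
      ¬ (graphOf (A.erase f)).Reachable u v := by
    intro u v hF' hsep' hua hvb hfr
    have havoid := hab ▸ avoid (c := a) (d := b) hfr.symm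
    rw [← erase_swap] at havoid
    rcases havoid with h | h | h
    · exact hsep' (reach_mono sub_e h.symm)
    · exact tree_bridge hA he hab (ne_ab hA he hab)
        (((reach_mono sub_e h).symm).trans hvb)
    · -- v ∈ M, u ∉ M
      have hvM : v ∈ midComp A e f := by rw [hMeq]; exact h.symm
      have huM : u ∉ midComp A e f := by
        rw [hMeq]
        intro hbu
        exact tree_bridge hA he hab (ne_ab hA he hab)
          ((reach_mono sub_e hbu).trans hua).symm
      obtain ⟨w⟩ := hF'.symm
      obtain ⟨x, y, hadj, hxW, hyW⟩ := cut_lemma w hvM huM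
      exact hM ⟨s(x,y), hadj.2, x, y, rfl, hxW, hyW⟩
  have h1 : (graphOf (A.erase e)).Reachable p.1 a ∨ (graphOf (A.erase e)).Reachable p.1 b := by
    rcases (hab ▸ avoid (c := a) (d := b) hAr) with h | h | h
    · exact absurd h hsep
    · exact Or.inl h
    · exact Or.inr h
  have h2 : (graphOf (A.erase e)).Reachable p.2 a ∨ (graphOf (A.erase e)).Reachable p.2 b := by
    rcases (hab ▸ avoid (c := a) (d := b) hAr.symm) with h | h | h
    · exact absurd h.symm hsep
    · exact Or.inl h
    · exact Or.inr h
  intro hfeas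
  have hr : (graphOf (A.erase f)).Reachable p.1 p.2 := hfeas p hpT
  rcases h1 with h1 | h1 <;> rcases h2 with h2 | h2
  · exact hsep (h1.trans h2.symm)
  · exact key p.1 p.2 hFr hsep h1 h2 hr
  · exact key p.2 p.1 hFr.symm (fun h => hsep h.symm) h2 h1 hr.symm
  · exact hsep (h1.trans h2.symm)

end Main

lemma midComp_symm {A : Finset (Sym2 V)} {e f : Sym2 V} :
    midComp A f e = midComp A e f := by
  unfold midComp
  rw [Finset.pair_comm f e]
  ext v
  constructor <;> rintro ⟨x, hx, y, hy, hxy, hxv⟩ <;>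
    exact ⟨y, hy, x, hx, hxy.symm, hxy.symm.trans hxv⟩

end Aux

theorem stmt5_classification
    (T : Finset (V × V)) (A F : Finset (Sym2 V))
    (hAfeas : Feasible A T) (hFfeas : Feasible F T)
    (hAtree : IsTreeSol A) (hsupp : supp A = supp F) :
    (∀ e ∈ A, ∀ f ∈ A, Compatible A F e f → (Essential A T e ↔ Essential A T f)) ∧
    (∀ e ∈ A, ∀ f ∈ A, ¬ Safe A F e → ¬ Safe A F f → Compatible A F e f) ∧
    (∀ e ∈ A, ¬ Safe A F e → cls A F e = unsafeCls A F) ∧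
    (∀ e ∈ A, (∀ f ∈ cls A F e, Essential A T f) ∨ ∀ f ∈ cls A F e, ¬ Essential A T f) ∧
    (∀ e ∈ A, cls A F e ≠ unsafeCls A F → ∀ f ∈ cls A F e, Safe A F f) := by
  have part1 : ∀ e ∈ A, ∀ f ∈ A, Compatible A F e f →
      (Essential A T e ↔ Essential A T f) := by
    intro e he f hf hcomp
    rcases eq_or_ne e f with rfl | hef
    · exact Iff.rfl
    · have hM : ¬ leavesSet F (midComp A e f) := hcomp.resolve_left hef
      have hM' : ¬ leavesSet F (midComp A f e) := by rw [midComp_symm]; exact hM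
      exact ⟨essential_of_compat hAfeas hFfeas hAtree he hf hef hM,
             essential_of_compat hAfeas hFfeas hAtree hf he hef.symm hM'⟩
  have part2 : ∀ e ∈ A, ∀ f ∈ A, ¬ Safe A F e → ¬ Safe A F f → Compatible A F e f := by
    intro e he f hf hue huf
    rcases eq_or_ne e f with rfl | hef
    · exact Or.inl rfl
    · exact Or.inr (compat_of_unsafe hAtree he hf hef hue huf)
  have part3 : ∀ e ∈ A, ¬ Safe A F e → cls A F e = unsafeCls A F := by
    intro e he hue
    ext g
    simp only [cls, unsafeCls, Finset.mem_filter]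
    constructor
    · rintro ⟨hgA, hcomp⟩
      refine ⟨hgA, ?_⟩
      rcases eq_or_ne e g with rfl | hne
      · exact hue
      · exact unsafe_of_compat hAtree he hgA hne (hcomp.resolve_left hne) hue
    · rintro ⟨hgA, hug⟩
      exact ⟨hgA, part2 e he g hgA hue hug⟩
  refine ⟨part1, part2, part3, ?_, ?_⟩
  · intro e he
    by_cases hE : Essential A T e
    · left
      intro g hg
      have hg' := Finset.mem_filter.mp hg
      exact (part1 e he g hg'.1 hg'.2).mp hE
    · right
      intro g hg h
      have hg' := Finset.mem_filter.mp hg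
      exact hE ((part1 e he g hg'.1 hg'.2).mpr h)
  · intro e he hne g hg
    by_contra hug
    have hg' := Finset.mem_filter.mp hg
    apply hne
    rcases eq_or_ne e g with rfl | hne'
    · exact part3 e he hug
    · have hM : ¬ leavesSet F (midComp A e g) := hg'.2.resolve_left hne'
      have hM' : ¬ leavesSet F (midComp A g e) := by rw [midComp_symm]; exact hM
      have hue : ¬ Safe A F e := unsafe_of_compat hAtree hg'.1 he hne'.symm hM' hug
      exact part3 e he hue
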